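/- arXiv:2305.04514 — 6 statements merged into one kernel-verified Lean document; each statement's English description precedes it below -/
import Mathlib

section
/- Let (Ω, ℱ) be a measurable space and let 𝒮 be a nonempty set of probability measures on Ω that is closed under the countable mixtures ∑_{k=0}^∞ 2^{-(k+1)} P_k, i.e., for every sequence (P_k)_{k∈ℕ} in 𝒮 the probability measure P = ∑_{k=0}^∞ 2^{-(k+1)} P_k belongs to 𝒮. Let f : Ω → [0,∞] be measurable and suppose that ∫_Ω f dP < ∞ for every P ∈ 𝒮. Then sup_{P∈𝒮} ∫_Ω f dP < ∞. -/
open MeasureTheory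
open scoped ENNReal

/-- If a nonempty set `𝒮` of probability measures is closed under the countable mixtures
`∑ₖ 2^{-(k+1)} Pₖ`, and `f : Ω → [0,∞]` is measurable with finite integral under every member
of `𝒮`, then the integrals are uniformly bounded over `𝒮`. -/
theorem stmt_1 {Ω : Type*} [MeasurableSpace Ω] (𝒮 : Set (Measure Ω))
    (h𝒮ne : 𝒮.Nonempty)
    (h𝒮prob : ∀ P ∈ 𝒮, IsProbabilityMeasure P)
    (h𝒮mix : ∀ P : ℕ → Measure Ω, (∀ k, P k ∈ 𝒮) →
      Measure.sum (fun k => ((2 : ℝ≥0∞)⁻¹ ^ (k + 1)) • P k) ∈ 𝒮)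
    (f : Ω → ℝ≥0∞) (hf : Measurable f)
    (hfint : ∀ P ∈ 𝒮, ∫⁻ ω, f ω ∂P < ⊤) :
    (⨆ P ∈ 𝒮, ∫⁻ ω, f ω ∂P) < ⊤ := by
  by_contra h
  push_neg at h
  have hsup : (⨆ P ∈ 𝒮, ∫⁻ ω, f ω ∂P) = ⊤ := top_le_iff.mp h
  have hchoice : ∀ k : ℕ, ∃ Q : Measure Ω, Q ∈ 𝒮 ∧ (2 : ℝ≥0∞) ^ (k + 1) < ∫⁻ ω, f ω ∂Q := by
    intro k
    have hlt : (2 : ℝ≥0∞) ^ (k + 1) < ⨆ P ∈ 𝒮, ∫⁻ ω, f ω ∂P := by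
      rw [hsup]
      exact ENNReal.pow_lt_top (by norm_num)
    rw [lt_iSup_iff] at hlt
    obtain ⟨Q, hQ⟩ := hlt
    rw [lt_iSup_iff] at hQ
    obtain ⟨hQ𝒮, hQ⟩ := hQ
    exact ⟨Q, hQ𝒮, hQ⟩
  choose P hP𝒮 hPint using hchoice
  have hmix := h𝒮mix P hP𝒮
  have hfin := hfint _ hmix
  have : (∫⁻ ω, f ω ∂(Measure.sum (fun k => ((2 : ℝ≥0∞)⁻¹ ^ (k + 1)) • P k))) = ⊤ := by
    rw [lintegral_sum_measure]
    refine top_le_iff.mp ?_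
    calc (⊤ : ℝ≥0∞) = ∑' _ : ℕ, (1 : ℝ≥0∞) := by
          exact (ENNReal.tsum_const_eq_top_of_ne_zero one_ne_zero).symm
      _ ≤ ∑' k, ∫⁻ ω, f ω ∂(((2 : ℝ≥0∞)⁻¹ ^ (k + 1)) • P k) := by
          refine ENNReal.tsum_le_tsum fun k => ?_
          rw [lintegral_smul_measure]
          have h1 : (1 : ℝ≥0∞) = (2 : ℝ≥0∞)⁻¹ ^ (k + 1) * (2 : ℝ≥0∞) ^ (k + 1) := by
            rw [← mul_pow, ENNReal.inv_mul_cancel (by norm_num) (by norm_num), one_pow]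
          rw [h1]
          exact mul_le_mul_right (hPint k).le _
  rw [this] at hfin
  exact absurd hfin (lt_irrefl ⊤)
end

section
/- Let X be a measurable space, K a Markov kernel on X given X, Δ ⊆ X a measurable set that is absorbing for K, and η a finite nonnegative measure on X. Suppose a finite nonnegative measure ξ on X satisfies the fixed-point equation ξ = (η + ξK)|_{Δᶜ}, i.e., ξ(B) = η(B ∩ Δᶜ) + (ξK)(B ∩ Δᶜ) for every measurable B. Then for every t ∈ ℕ, ξ = ∑_{k=0}^{t} (ηK^k)|_{Δᶜ} + (ξK^{t+1})|_{Δᶜ}. -/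
open MeasureTheory ProbabilityTheory
open scoped ENNReal

/-- `iterK K μ t` is the measure `μ K^t` obtained by letting a Markov kernel `K` act `t`
times on the measure `μ`. -/
noncomputable def iterK {X : Type*} [MeasurableSpace X] (K : Kernel X X)
    (μ : Measure X) : ℕ → Measure X
  | 0 => μ
  | (t + 1) => (iterK K μ t).bind fun x => K x

section aux

variable {X : Type*} [MeasurableSpace X] (K : Kernel X X)

lemma bind_add' (μ ν : Measure X) :
    (μ + ν).bind (fun x => K x) = μ.bind (fun x => K x) + ν.bind (fun x => K x) := by
  ext s hs
  rw [Measure.bind_apply hs K.measurable.aemeasurable, Measure.add_apply,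
    Measure.bind_apply hs K.measurable.aemeasurable, Measure.bind_apply hs K.measurable.aemeasurable,
    lintegral_add_measure]

lemma iterK_add (μ ν : Measure X) (n : ℕ) :
    iterK K (μ + ν) n = iterK K μ n + iterK K ν n := by
  induction n with
  | zero => rfl
  | succ n ih => simp only [iterK, ih, bind_add' K]

lemma iterK_shift (μ : Measure X) (n : ℕ) :
    iterK K (μ.bind fun x => K x) n = iterK K μ (n + 1) := by
  induction n with
  | zero => rfl
  | succ n ih => simp only [iterK, ih]

lemma iterK_compl_zero {Δ : Set X} (hΔ : MeasurableSet Δ) [IsMarkovKernel K]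
    (habs : ∀ x ∈ Δ, K x Δ = 1)
    (μ : Measure X) (hμ : μ Δᶜ = 0) (n : ℕ) : iterK K μ n Δᶜ = 0 := by
  induction n with
  | zero => exact hμ
  | succ n ih =>
    show (iterK K μ n).bind (fun x => K x) Δᶜ = 0
    rw [Measure.bind_apply hΔ.compl K.measurable.aemeasurable]
    have : ∀ᵐ x ∂(iterK K μ n), x ∈ Δ := by
      rw [MeasureTheory.ae_iff]
      exact ih
    rw [lintegral_eq_zero_iff (K.measurable_coe hΔ.compl)]
    filter_upwards [this] with x hx
    have h1 := habs x hx
    have : K x Δᶜ = K x Set.univ - K x Δ := by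
      rw [measure_compl hΔ (measure_ne_top _ _)]
    simp [this, h1]

lemma iterK_restrict_compl {Δ : Set X} (hΔ : MeasurableSet Δ) [IsMarkovKernel K]
    (habs : ∀ x ∈ Δ, K x Δ = 1) (μ : Measure X) (n : ℕ) :
    (iterK K μ n).restrict Δᶜ = (iterK K (μ.restrict Δᶜ) n).restrict Δᶜ := by
  have hsplit : μ = μ.restrict Δᶜ + μ.restrict Δ := by
    conv_lhs => rw [← Measure.restrict_add_restrict_compl (μ := μ) hΔ.compl]
    rw [compl_compl]
  conv_lhs => rw [hsplit]
  rw [iterK_add, Measure.restrict_add]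
  have h0 : (iterK K (μ.restrict Δ) n).restrict Δᶜ = 0 := by
    have := iterK_compl_zero K hΔ habs (μ.restrict Δ)
      (by rw [Measure.restrict_apply hΔ.compl]; simp) n
    ext s hs
    rw [Measure.restrict_apply hs]
    exact measure_mono_null (Set.inter_subset_right) this
  rw [h0, add_zero]

end aux

/-- If a finite measure `ξ` satisfies the fixed-point equation `ξ = (η + ξK)|_{Δᶜ}`, where `Δ`
is absorbing for the Markov kernel `K`, then for every `t`,
`ξ = ∑_{k=0}^{t} (η K^k)|_{Δᶜ} + (ξ K^{t+1})|_{Δᶜ}`. -/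
theorem stmt_5 {X : Type*} [MeasurableSpace X] (K : Kernel X X) [IsMarkovKernel K]
    (Δ : Set X) (hΔ : MeasurableSet Δ) (habs : ∀ x ∈ Δ, K x Δ = 1)
    (η : Measure X) [IsFiniteMeasure η]
    (ξ : Measure X) [IsFiniteMeasure ξ]
    (hξ : ξ = (η + ξ.bind fun x => K x).restrict Δᶜ) :
    ∀ t : ℕ, ξ = (∑ k ∈ Finset.range (t + 1), (iterK K η k).restrict Δᶜ)
      + (iterK K ξ (t + 1)).restrict Δᶜ := by
  intro t
  induction t with
  | zero =>
    simpa [iterK, Measure.restrict_add] using hξ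
  | succ t ih =>
    have key : (iterK K ξ (t + 1)).restrict Δᶜ
        = (iterK K η (t + 1)).restrict Δᶜ + (iterK K ξ (t + 2)).restrict Δᶜ := by
      conv_lhs => rw [hξ]
      rw [← iterK_restrict_compl K hΔ habs, iterK_add, Measure.restrict_add,
        iterK_shift]
    rw [Finset.sum_range_succ]
    conv_lhs => rw [ih, key]
    abel
end

section
/- Let X be a measurable space, λ a probability measure on X, K a Markov kernel on X given X with K(·|x) ≪ λ for every x ∈ X, Δ ⊆ X a measurable set, and η a probability measure on X with η ≪ λ. Suppose a finite nonnegative measure ξ on X satisfies ξ = (η + ξK)|_{Δᶜ}. Then ξ(Δ) = 0 and ξ ≪ λ. If moreover λ ≪ η, then ξ and λ|_{Δᶜ} are mutually absolutely continuous: for every measurable B, ξ(B) = 0 if and only if λ(B ∩ Δᶜ) = 0. -/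
open MeasureTheory ProbabilityTheory
open scoped ENNReal

/-- If `ξ` is a finite measure satisfying `ξ = (η + ξK)|_{Δᶜ}`, with `K(·|x) ≪ λ` for all `x`
and `η ≪ λ`, then `ξ(Δ) = 0` and `ξ ≪ λ`; if moreover `λ ≪ η` then `ξ` and `λ|_{Δᶜ}` are
mutually absolutely continuous. -/
theorem stmt_7 {X : Type*} [MeasurableSpace X] (lam : Measure X) [IsProbabilityMeasure lam]
    (K : Kernel X X) [IsMarkovKernel K] (hac : ∀ x, K x ≪ lam)
    (Δ : Set X) (hΔ : MeasurableSet Δ)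
    (η : Measure X) [IsProbabilityMeasure η] (hη : η ≪ lam)
    (ξ : Measure X) [IsFiniteMeasure ξ]
    (hξ : ξ = (η + ξ.bind fun x => K x).restrict Δᶜ) :
    ξ Δ = 0 ∧ ξ ≪ lam ∧
      (lam ≪ η → ∀ B : Set X, MeasurableSet B → (ξ B = 0 ↔ lam (B ∩ Δᶜ) = 0)) := by
  have hbind : ∀ B : Set X, MeasurableSet B →
      (ξ.bind fun x => K x) B = ∫⁻ x, K x B ∂ξ :=
    fun B hB => Measure.bind_apply hB K.measurable.aemeasurable
  have hξΔ : ξ Δ = 0 := by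
    rw [hξ, Measure.restrict_apply hΔ]
    simp
  refine ⟨hξΔ, ?_, ?_⟩
  · refine Measure.AbsolutelyContinuous.mk fun B hB hlamB => ?_
    have hη0 : η B = 0 := hη hlamB
    have hK0 : (ξ.bind fun x => K x) B = 0 := by
      rw [hbind B hB]
      have h : ∀ x, K x B = 0 := fun x => hac x hlamB
      simp [h]
    rw [hξ, Measure.restrict_apply hB]
    refine measure_mono_null Set.inter_subset_left ?_
    simp [Measure.add_apply, hη0, hK0]
  · intro hle B hB
    constructor
    · intro h0
      rw [hξ, Measure.restrict_apply hB, Measure.add_apply] at h0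
      exact hle (add_eq_zero.mp h0).1
    · intro hlam0
      have hη0 : η (B ∩ Δᶜ) = 0 := hη hlam0
      have hK0 : (ξ.bind fun x => K x) (B ∩ Δᶜ) = 0 := by
        rw [hbind _ (hB.inter hΔ.compl)]
        have h : ∀ x, K x (B ∩ Δᶜ) = 0 := fun x => hac x hlam0
        simp [h]
      rw [hξ, Measure.restrict_apply hB, Measure.add_apply, hη0, hK0]
      simp
end

section
/- Let X be a measurable space, K a Markov kernel on X given X, Δ ⊆ X a measurable set that is absorbing for K, and η a probability measure on X with ∑_{k=0}^∞ (ηK^k)(Δᶜ) < ∞. Define the finite measure γ := ∑_{k=0}^∞ (ηK^k)|_{Δᶜ}. Then for every t ∈ ℕ, (γK^t)(Δᶜ) = ∑_{k=t}^∞ (ηK^k)(Δᶜ). -/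
open MeasureTheory ProbabilityTheory
open scoped ENNReal

section aux

variable {X : Type*} [MeasurableSpace X] (K : Kernel X X)

lemma sum_bind (μ : ℕ → Measure X) :
    (Measure.sum μ).bind (fun x => K x) = Measure.sum fun i => (μ i).bind (fun x => K x) := by
  ext s hs
  rw [Measure.bind_apply hs K.measurable.aemeasurable, MeasureTheory.lintegral_sum_measure,
    Measure.sum_apply _ hs]
  exact tsum_congr fun i => (Measure.bind_apply hs K.measurable.aemeasurable).symm

lemma iterK_sum (μ : ℕ → Measure X) (t : ℕ) :
    iterK K (Measure.sum μ) t = Measure.sum fun i => iterK K (μ i) t := by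
  induction t with
  | zero => rfl
  | succ t ih => rw [iterK, ih, sum_bind]; rfl

lemma iterK_iterK (μ : Measure X) (k t : ℕ) :
    iterK K (iterK K μ k) t = iterK K μ (k + t) := by
  induction t with
  | zero => rfl
  | succ t ih => rw [iterK, ih, ← Nat.add_assoc]; rfl

variable [IsMarkovKernel K] {Δ : Set X} (hΔ : MeasurableSet Δ) (habs : ∀ x ∈ Δ, K x Δ = 1)

include hΔ habs

lemma restrict_bind (μ : Measure X) :
    (μ.bind fun x => K x).restrict Δᶜ = ((μ.restrict Δᶜ).bind fun x => K x).restrict Δᶜ := by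
  ext s hs
  rw [Measure.restrict_apply hs, Measure.restrict_apply hs,
    Measure.bind_apply (hs.inter hΔ.compl) K.measurable.aemeasurable,
    Measure.bind_apply (hs.inter hΔ.compl) K.measurable.aemeasurable,
    ← MeasureTheory.lintegral_add_compl (μ := μ) _ hΔ]
  have h1 : ∫⁻ x in Δ, K x (s ∩ Δᶜ) ∂μ = 0 := by
    rw [MeasureTheory.setLIntegral_eq_zero_iff hΔ (K.measurable_coe (hs.inter hΔ.compl))]
    refine Filter.Eventually.of_forall fun x hx => ?_
    have hle : K x (s ∩ Δᶜ) ≤ K x Δᶜ := measure_mono Set.inter_subset_right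
    have h2 : K x Δᶜ = 0 := by
      simp [measure_compl hΔ (measure_ne_top _ _), habs x hx]
    exact le_antisymm (hle.trans_eq h2) zero_le
  rw [h1, zero_add]

lemma restrict_iterK (μ : Measure X) (t : ℕ) :
    (iterK K μ t).restrict Δᶜ = (iterK K (μ.restrict Δᶜ) t).restrict Δᶜ := by
  induction t with
  | zero => simp [iterK, Measure.restrict_restrict hΔ.compl]
  | succ t ih =>
      show ((iterK K μ t).bind fun x => K x).restrict Δᶜ = _
      rw [restrict_bind K hΔ habs, ih, ← restrict_bind K hΔ habs]
      rfl

end aux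

/-- If `Δ` is absorbing for the Markov kernel `K` and `∑ₖ (η K^k)(Δᶜ) < ∞`, then the
occupation measure `γ := ∑ₖ (η K^k)|_{Δᶜ}` satisfies `(γ K^t)(Δᶜ) = ∑_{k ≥ t} (η K^k)(Δᶜ)`
for every `t`. -/
theorem stmt_10 {X : Type*} [MeasurableSpace X] (K : Kernel X X) [IsMarkovKernel K]
    (Δ : Set X) (hΔ : MeasurableSet Δ) (habs : ∀ x ∈ Δ, K x Δ = 1)
    (η : Measure X) [IsProbabilityMeasure η]
    (hsum : ∑' t, iterK K η t Δᶜ < ⊤) :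
    ∀ t : ℕ, iterK K (Measure.sum fun k => (iterK K η k).restrict Δᶜ) t Δᶜ
      = ∑' k : ℕ, iterK K η (t + k) Δᶜ := by
  intro t
  rw [iterK_sum, Measure.sum_apply _ hΔ.compl]
  refine tsum_congr fun k => ?_
  have h1 : iterK K ((iterK K η k).restrict Δᶜ) t Δᶜ = iterK K (iterK K η k) t Δᶜ := by
    have := restrict_iterK K hΔ habs (iterK K η k) t
    rw [← Measure.restrict_apply_self, ← this, Measure.restrict_apply_self]
  rw [h1, iterK_iterK, Nat.add_comm k t]
end

section
/- Let X and A be measurable spaces, Q a Markov kernel from X × A to X, π a Markov kernel from X to A, and define the Markov kernel Q_π on X given X by Q_π(B|x) := ∫_A Q(B|x,a) π(da|x). Let Δ ⊆ X be measurable with Q(Δ|x,a) = 1 for every (x,a) ∈ Δ × A, and let η be a probability measure on X with ∑_{t=0}^∞ (ηQ_π^t)(Δᶜ) < ∞. Define γ := ∑_{t=0}^∞ (ηQ_π^t)|_{Δᶜ} and let μ := γ ⊗ π be the measure on X × A determined by μ(B × C) = ∫_B π(C|x) dγ(x). Then μ is a finite measure whose X-marginal μ^X equals γ, and μ^X = (η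 + μQ)|_{Δᶜ}, where (μQ)(B) := ∫_{X×A} Q(B|x,a) dμ(x,a); that is, μ^X(B) = η(B ∩ Δᶜ) + ∫_{X×A} Q(B ∩ Δᶜ|x,a) dμ(x,a) for every measurable B ⊆ X. -/
open MeasureTheory ProbabilityTheory
open scoped ENNReal
set_option maxHeartbeats 1000000

/-- The occupation measure `μ = γ ⊗ π` of a stationary Markov strategy `π` (with
`γ := ∑ₜ (η Q_π^t)|_{Δᶜ}`) is a finite measure whose `X`-marginal equals `γ` and satisfies the
characteristic equation `μ^X = (η + μQ)|_{Δᶜ}`. -/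
theorem stmt_12 {X A : Type*} [MeasurableSpace X] [MeasurableSpace A]
    (Q : Kernel (X × A) X) [IsMarkovKernel Q]
    (π : Kernel X A) [IsMarkovKernel π]
    (Qpi : Kernel X X) [IsMarkovKernel Qpi]
    (hQpi : ∀ (x : X) (B : Set X), MeasurableSet B →
      Qpi x B = ∫⁻ a, Q (x, a) B ∂(π x))
    (Δ : Set X) (hΔ : MeasurableSet Δ)
    (habsQ : ∀ x ∈ Δ, ∀ a : A, Q (x, a) Δ = 1)
    (η : Measure X) [IsProbabilityMeasure η]
    (hsum : ∑' t, iterK Qpi η t Δᶜ < ⊤)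
    (μ : Measure (X × A))
    (hμ : ∀ (B : Set X) (C : Set A), MeasurableSet B → MeasurableSet C →
      μ (B ×ˢ C) = ∫⁻ x in B, π x C ∂(Measure.sum fun t => (iterK Qpi η t).restrict Δᶜ)) :
    IsFiniteMeasure μ ∧
    μ.fst = (Measure.sum fun t => (iterK Qpi η t).restrict Δᶜ) ∧
    ∀ B : Set X, MeasurableSet B →
      μ.fst B = η (B ∩ Δᶜ) + ∫⁻ p, Q p (B ∩ Δᶜ) ∂μ := by
  set γ : Measure X := Measure.sum fun t => (iterK Qpi η t).restrict Δᶜ with hγ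
  have hγ_apply : ∀ (B : Set X), MeasurableSet B → γ B = ∑' t, iterK Qpi η t (B ∩ Δᶜ) := by
    intro B hB
    rw [hγ, Measure.sum_apply _ hB]
    congr 1; ext t
    rw [Measure.restrict_apply hB]
  have hγ_fin : IsFiniteMeasure γ := by
    constructor
    rw [hγ_apply _ MeasurableSet.univ]
    simpa using hsum
  have hμγ : ∀ (B : Set X) (C : Set A), MeasurableSet B → MeasurableSet C →
      μ (B ×ˢ C) = (γ.compProd π) (B ×ˢ C) := by
    intro B C hB hC
    rw [hμ B C hB hC, Measure.compProd_apply_prod hB hC]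
  have hμ_fin : IsFiniteMeasure μ := by
    constructor
    rw [← Set.univ_prod_univ, hμγ _ _ MeasurableSet.univ MeasurableSet.univ,
      Set.univ_prod_univ]
    exact measure_lt_top _ _
  have hμeq : μ = γ.compProd π := by
    refine ext_of_generate_finite _ generateFrom_prod.symm isPiSystem_prod ?_ ?_
    · rintro s ⟨B, hB, C, hC, rfl⟩
      exact hμγ B C hB hC
    · rw [← Set.univ_prod_univ, hμγ _ _ MeasurableSet.univ MeasurableSet.univ]
  have hfst : μ.fst = γ := by
    ext B hB
    rw [Measure.fst_apply hB, ← Set.prod_univ, hμγ _ _ hB MeasurableSet.univ,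
      Measure.compProd_apply_prod hB MeasurableSet.univ]
    simp [setLIntegral_one, Measure.restrict_apply MeasurableSet.univ]
  refine ⟨hμ_fin, hfst, ?_⟩
  intro B hB
  set B' := B ∩ Δᶜ with hB'def
  have hB' : MeasurableSet B' := hB.inter hΔ.compl
  have hB'sub : B' ⊆ Δᶜ := Set.inter_subset_right
  -- for x ∈ Δ, Qpi x B' = 0
  have hQpi0 : ∀ x ∈ Δ, Qpi x B' = 0 := by
    intro x hx
    rw [hQpi x B' hB']
    have : ∀ a, Q (x, a) B' = 0 := by
      intro a
      have h1 : Q (x, a) Δᶜ = 0 := (prob_compl_eq_zero_iff hΔ).2 (habsQ x hx a)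
      exact le_antisymm (h1 ▸ measure_mono hB'sub) zero_le
    simp [this]
  -- the key step: ∫⁻ x in Δᶜ, Qpi x B' ∂ν = ∫⁻ x, Qpi x B' ∂ν
  have hkey : ∀ ν : Measure X, ∫⁻ x in Δᶜ, Qpi x B' ∂ν = ∫⁻ x, Qpi x B' ∂ν := by
    intro ν
    have hmeas : Measurable fun x => Qpi x B' := Qpi.measurable_coe hB'
    conv_rhs => rw [← lintegral_add_compl (fun x => Qpi x B') hΔ]
    have : ∫⁻ x in Δ, Qpi x B' ∂ν = 0 := by
      rw [setLIntegral_congr_fun hΔ (show Set.EqOn (fun x => Qpi x B') (fun _ => 0) Δ from hQpi0)]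
      simp
    rw [this, zero_add]
  -- iterK (t+1) B' = ∫⁻ x, Qpi x B' ∂ iterK t
  have hiter : ∀ t, iterK Qpi η (t + 1) B' = ∫⁻ x, Qpi x B' ∂(iterK Qpi η t) := by
    intro t
    show ((iterK Qpi η t).bind fun x => Qpi x) B' = _
    rw [Measure.bind_apply hB' (Kernel.measurable Qpi).aemeasurable]
  -- compute ∫⁻ p, Q p B' ∂μ
  have hint : ∫⁻ p, Q p B' ∂μ = ∑' t, iterK Qpi η (t + 1) B' := by
    rw [hμeq, Measure.lintegral_compProd (Q.measurable_coe hB')]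
    have : ∀ x, ∫⁻ a, Q (x, a) B' ∂(π x) = Qpi x B' := fun x => (hQpi x B' hB').symm
    simp_rw [this]
    rw [hγ, lintegral_sum_measure]
    congr 1; ext t
    rw [hkey, hiter]
  have h0 : iterK Qpi η 0 = η := by simp [iterK]
  rw [hfst, hγ_apply B hB, hint,
    tsum_eq_zero_add' (f := fun t => iterK Qpi η t (B ∩ Δᶜ)) ENNReal.summable, h0, hB'def]
end

section
/- Let X be a countable set (with the discrete σ-algebra) and λ a probability measure on X. Let N ≥ 1 and for each i ∈ {1,…,N} let A^i be a compact metric space, and let A = A^1 × ⋯ × A^N with the product topology. For each i and each n ∈ ℕ let π_n^i, π^i : X → P(A^i) be maps into the probability measures on A^i such that for every x ∈ X and every i, π_n^i(x) converges weakly to π^i(x) as n → ∞. Let f : X × A → ℝ be such that a ↦ f(x,a) is continuous for every x ∈ X and |f(x,a)| ≤ F(x) for all (x,a), where ∑_{x∈X} F(x) λ({x}) < ∞. Then ∑_{x∈X} λ({x}) ∫_A f(x,a) d(π_n^1(x) × ⋯ × π_n^N(x))(a) → ∑_{x∈X} λ({x}) ∫_A f(x,a) d(π^1(x) × ⋯ ×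 π^N(x))(a) as n → ∞. -/
open MeasureTheory Filter
open scoped ENNReal Topology

section Aux

variable {N : ℕ} {A : Fin N → Type*} [∀ i, MetricSpace (A i)]
    [∀ i, CompactSpace (A i)] [∀ i, MeasurableSpace (A i)] [∀ i, BorelSpace (A i)]

/-- The monomial `a ↦ ∏ i, g i (a i)` as a continuous map. -/
noncomputable def gameMonomial (g : ∀ i, C(A i, ℝ)) : C((∀ i, A i), ℝ) :=
  ⟨fun a => ∏ i, g i (a i),
    continuous_finset_prod _ fun i _ => (g i).continuous.comp (continuous_apply i)⟩

/-- The submonoid of monomials in `C(Π i, A i, ℝ)`. -/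
noncomputable def gameMonomials : Submonoid C((∀ i : Fin N, A i), ℝ) where
  carrier := {f | ∃ g : ∀ i, C(A i, ℝ), f = gameMonomial g}
  one_mem' := ⟨fun _ => 1, by ext a; simp [gameMonomial]⟩
  mul_mem' := by
    rintro f₁ f₂ ⟨g₁, rfl⟩ ⟨g₂, rfl⟩
    exact ⟨fun i => g₁ i * g₂ i, by ext a; simp [gameMonomial, Finset.prod_mul_distrib]⟩

lemma integral_gameMonomial (μ : ∀ i, ProbabilityMeasure (A i)) (g : ∀ i, C(A i, ℝ)) :
    ∫ a, gameMonomial g a ∂(Measure.pi fun i => (μ i : Measure (A i))) =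
      ∏ i, ∫ x, g i x ∂(μ i : Measure (A i)) := by
  letI : ∀ i, MeasureSpace (A i) := fun i => ⟨(μ i : Measure (A i))⟩
  have : ∀ i, SigmaFinite (volume : Measure (A i)) := fun i => by
    show SigmaFinite ((μ i : Measure (A i)))
    infer_instance
  exact MeasureTheory.integral_fintype_prod_eq_prod (fun i x => g i x)

lemma key_tendsto (μn : ℕ → ∀ i, ProbabilityMeasure (A i)) (μ : ∀ i, ProbabilityMeasure (A i))
    (h : ∀ i, Tendsto (fun n => μn n i) atTop (𝓝 (μ i)))
    (f : (∀ i, A i) → ℝ) (hf : Continuous f) :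
    Tendsto (fun n => ∫ a, f a ∂(Measure.pi fun i => (μn n i : Measure (A i)))) atTop
      (𝓝 (∫ a, f a ∂(Measure.pi fun i => (μ i : Measure (A i))))) := by
  set P : C((∀ i, A i), ℝ) → Prop := fun g =>
    Tendsto (fun n => ∫ a, g a ∂(Measure.pi fun i => (μn n i : Measure (A i)))) atTop
      (𝓝 (∫ a, g a ∂(Measure.pi fun i => (μ i : Measure (A i))))) with hP
  have integ : ∀ (g : C((∀ i, A i), ℝ)) (ν : Measure (∀ i, A i)) [IsFiniteMeasure ν],
      Integrable g ν := fun g ν _ =>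
    (BoundedContinuousFunction.mkOfCompact g).integrable ν
  -- monomials
  have hmono : ∀ g ∈ ((gameMonomials (A := A) : Submonoid _) : Set C((∀ i : Fin N, A i), ℝ)), P g := by
    rintro _ ⟨g, rfl⟩
    rw [hP]
    simp only [integral_gameMonomial]
    refine tendsto_finset_prod _ fun i _ => ?_
    have := (ProbabilityMeasure.tendsto_iff_forall_integral_tendsto.mp (h i))
      (BoundedContinuousFunction.mkOfCompact (g i))
    simpa using this
  -- span
  have hspan : ∀ g ∈ Submodule.span ℝ ((gameMonomials (A := A) : Submonoid _) : Set C((∀ i : Fin N, A i), ℝ)), P g := by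
    intro g hg
    refine Submodule.span_induction (p := fun g _ => P g) hmono ?_ ?_ ?_ hg
    · simpa [hP] using tendsto_const_nhds
    · intro u v _ _ hu hv
      have := hu.add hv
      simpa [hP, integral_add (integ _ _) (integ _ _)] using this
    · intro c u _ hu
      rw [hP]
      simp only [ContinuousMap.coe_smul, Pi.smul_apply, smul_eq_mul, integral_const_mul]
      exact hu.const_mul c
  -- adjoin = span
  have hadj : ∀ g ∈ Algebra.adjoin ℝ ((gameMonomials (A := A) : Submonoid _) : Set C((∀ i : Fin N, A i), ℝ)), P g := by
    intro g hg
    apply hspan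
    have : g ∈ Subalgebra.toSubmodule (Algebra.adjoin ℝ
        ((gameMonomials (A := A) : Submonoid _) : Set C((∀ i : Fin N, A i), ℝ))) := hg
    rw [Algebra.adjoin_eq_span, Submonoid.closure_eq] at this
    exact this
  -- separates points
  have hsep : (Algebra.adjoin ℝ ((gameMonomials (A := A) : Submonoid _) : Set C((∀ i : Fin N, A i), ℝ))).SeparatesPoints := by
    intro x y hxy
    have hex : ∃ i, x i ≠ y i := by
      by_contra hcon
      push_neg at hcon
      exact hxy (funext hcon)
    obtain ⟨i, hi⟩ := hex
    set d : C(A i, ℝ) := ContinuousMap.mk (fun t => dist t (x i))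
      (Continuous.dist continuous_id continuous_const) with hd
    set g : ∀ j, C(A j, ℝ) := Function.update (fun j => (1 : C(A j, ℝ))) i d with hg
    have hgi : g i = d := by rw [hg]; simp
    have hgj : ∀ j, j ≠ i → g j = 1 := by
      intro j hj; rw [hg]; simp [Function.update_of_ne hj]
    have hmem : gameMonomial g ∈ Algebra.adjoin ℝ
        ((gameMonomials (A := A) : Submonoid _) : Set C((∀ i : Fin N, A i), ℝ)) :=
      Algebra.subset_adjoin ⟨g, rfl⟩
    have hx : gameMonomial g x = 0 := by
      refine Finset.prod_eq_zero (Finset.mem_univ i) ?_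
      simp [hgi, hd]
    have hy : gameMonomial g y = dist (y i) (x i) := by
      show (∏ j, g j (y j)) = _
      rw [Finset.prod_eq_single i]
      · simp [hgi, hd]
      · intro j _ hj; simp [hgj j hj]
      · simp
    have hne : gameMonomial g x ≠ gameMonomial g y := by
      rw [hx, hy]
      intro hc
      exact hi (dist_eq_zero.mp hc.symm).symm
    exact ⟨(gameMonomial g : (∀ i, A i) → ℝ), ⟨gameMonomial g, hmem, rfl⟩, hne⟩
  -- epsilon/3
  have key : ∀ (g : C((∀ i, A i), ℝ)) (ν : Measure (∀ i, A i)) [IsProbabilityMeasure ν],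
      dist (∫ a, f a ∂ν) (∫ a, g a ∂ν) ≤ ‖g - ContinuousMap.mk f hf‖ := by
    intro g ν _
    have hfint : Integrable f ν := integ (ContinuousMap.mk f hf) ν
    rw [dist_eq_norm, ← integral_sub hfint (integ g ν)]
    have hb : ∀ᵐ a ∂ν, ‖f a - g a‖ ≤ ‖g - ContinuousMap.mk f hf‖ := by
      filter_upwards with a
      have h1 := (g - ContinuousMap.mk f hf).norm_coe_le_norm a
      rw [← norm_neg]
      simpa [neg_sub] using h1
    have := norm_integral_le_of_norm_le_const (μ := ν) hb
    simpa using this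
  rw [Metric.tendsto_atTop]
  intro ε hε
  obtain ⟨⟨g, hg⟩, hdist⟩ := ContinuousMap.exists_mem_subalgebra_near_continuousMap_of_separatesPoints
    (Algebra.adjoin ℝ ((gameMonomials (A := A) : Submonoid _) : Set C((∀ i : Fin N, A i), ℝ))) hsep
    (ContinuousMap.mk f hf) (ε / 3) (by linarith)
  have hPg : P g := hadj g hg
  rw [hP, Metric.tendsto_atTop] at hPg
  obtain ⟨n₀, hn₀⟩ := hPg (ε / 3) (by linarith)
  refine ⟨n₀, fun n hn => ?_⟩
  have h1 := key g (Measure.pi fun i => ((μn n i : Measure (A i)))) 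
  have h2 := key g (Measure.pi fun i => ((μ i : Measure (A i))))
  calc dist (∫ a, f a ∂(Measure.pi fun i => (μn n i : Measure (A i))))
        (∫ a, f a ∂(Measure.pi fun i => (μ i : Measure (A i))))
      ≤ dist (∫ a, f a ∂(Measure.pi fun i => (μn n i : Measure (A i))))
          (∫ a, g a ∂(Measure.pi fun i => (μn n i : Measure (A i)))) +
        dist (∫ a, g a ∂(Measure.pi fun i => (μn n i : Measure (A i))))
          (∫ a, g a ∂(Measure.pi fun i => (μ i : Measure (A i)))) +
        dist (∫ a, g a ∂(Measure.pi fun i => (μ i : Measure (A i))))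
          (∫ a, f a ∂(Measure.pi fun i => (μ i : Measure (A i)))) := dist_triangle4 _ _ _ _
    _ < ε := by
        have := hn₀ n hn
        have h2' := h2
        rw [dist_comm] at h2'
        linarith [h1, h2', this]

end Aux

/-- For a countable state space `X` with reference probability measure `λ`, compact metric
action spaces `A¹,…,A^N`, and Young measures `πₙⁱ(x) → πⁱ(x)` converging weakly for every state
`x` and player `i`, the integrals of any function `f(x,a)`, continuous in `a` and dominated by a
`λ`-integrable function `F`, against the product measures converge:
`∑ₓ λ{x} ∫ f(x,a) d(πₙ¹(x) × ⋯ × πₙᴺ(x)) → ∑ₓ λ{x} ∫ f(x,a) d(π¹(x) × ⋯ × πᴺ(x))`. -/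
theorem stmt_13 {X : Type*} [Countable X] [MeasurableSpace X] [DiscreteMeasurableSpace X]
    (lam : Measure X) [IsProbabilityMeasure lam]
    (N : ℕ) (hN : 1 ≤ N)
    (A : Fin N → Type*) [∀ i, MetricSpace (A i)] [∀ i, CompactSpace (A i)]
    [∀ i, MeasurableSpace (A i)] [∀ i, BorelSpace (A i)]
    (πn : ℕ → ∀ i : Fin N, X → ProbabilityMeasure (A i))
    (π : ∀ i : Fin N, X → ProbabilityMeasure (A i))
    (hconv : ∀ (x : X) (i : Fin N), Tendsto (fun n => πn n i x) atTop (nhds (π i x)))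
    (f : X → (∀ i, A i) → ℝ) (hfc : ∀ x, Continuous (f x))
    (F : X → ℝ) (hF : ∀ x a, |f x a| ≤ F x)
    (hFsum : ∑' x, ENNReal.ofReal (F x) * lam {x} ≠ ⊤) :
    Tendsto
      (fun n => ∑' x, (lam {x}).toReal *
        ∫ a, f x a ∂(Measure.pi fun i => (πn n i x : Measure (A i))))
      atTop
      (nhds (∑' x, (lam {x}).toReal *
        ∫ a, f x a ∂(Measure.pi fun i => (π i x : Measure (A i))))) := by
  rcases isEmpty_or_nonempty (∀ i, A i) with hA | hA
  · simp only [integral_of_isEmpty, mul_zero, tsum_zero]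
    exact tendsto_const_nhds
  · obtain ⟨a₀⟩ := hA
    have hF0 : ∀ x, 0 ≤ F x := fun x => (abs_nonneg _).trans (hF x a₀)
    have hsummable : Summable (fun x : X => F x * (lam {x}).toReal) := by
      have h1 := ENNReal.summable_toReal hFsum
      have h2 : (fun x : X => (ENNReal.ofReal (F x) * lam {x}).toReal) =
          fun x : X => F x * (lam {x}).toReal := by
        funext x
        rw [ENNReal.toReal_mul, ENNReal.toReal_ofReal (hF0 x)]
      rwa [h2] at h1
    have hbd : ∀ (n : ℕ) (x : X),
        ‖(lam {x}).toReal * ∫ a, f x a ∂(Measure.pi fun i => (πn n i x : Measure (A i)))‖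
          ≤ F x * (lam {x}).toReal := by
      intro n x
      rw [norm_mul, mul_comm (F x)]
      have h0 : ‖(lam {x}).toReal‖ = (lam {x}).toReal := Real.norm_of_nonneg ENNReal.toReal_nonneg
      rw [h0]
      refine mul_le_mul_of_nonneg_left ?_ ENNReal.toReal_nonneg
      have hb : ∀ᵐ a ∂(Measure.pi fun i => (πn n i x : Measure (A i))), ‖f x a‖ ≤ F x := by
        filter_upwards with a
        exact (hF x a)
      have := norm_integral_le_of_norm_le_const (μ := Measure.pi fun i => (πn n i x : Measure (A i))) hb
      simpa using this
    refine tendsto_tsum_of_dominated_convergence hsummable ?_ ?_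
    · intro x
      exact (key_tendsto (fun n i => πn n i x) (fun i => π i x) (fun i => hconv x i)
        (f x) (hfc x)).const_mul _
    · filter_upwards with n
      exact hbd n
end
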